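/- Let A_1, A_2, …, A_n be events in a probability space, and let H be a graph on vertex set {1, …, n} such that for each i, the event A_i is mutually independent of the family {A_j : ij ∉ E(H), j ≠ i}. If there exist real numbers 0 ≤ w_i < 1 such that for all i, Pr(A_i) ≤ w_i · ∏_{ij ∈ E(H)} (1 − w_j), then Pr(⋂_{i=1}^n A_i^c) ≥ ∏_{i=1}^n (1 − w_i) > 0; in particular, with positive probability no event A_i occurs. -/

import Mathlib

open MeasureTheory

/-- The (asymmetric) Lovász Local Lemma.  `H` is a dependency graph for the events
`A 1, …, A n`: each `A i` is mutually independent of the family of events `A j` with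
`j` not adjacent to `i` (and `j ≠ i`).  If there are weights `0 ≤ w i < 1` with
`Pr(A i) ≤ w i · ∏_{ij ∈ E(H)} (1 - w j)` for every `i`, then
`Pr(⋂ i, (A i)ᶜ) ≥ ∏ i (1 - w i) > 0`; in particular with positive probability
no event `A i` occurs. -/
theorem stmt1 {Ω : Type*} [MeasurableSpace Ω] (P : Measure Ω) [IsProbabilityMeasure P]
    (n : ℕ) (A : Fin n → Set Ω) (hA : ∀ i, MeasurableSet (A i))
    (H : SimpleGraph (Fin n)) [DecidableRel H.Adj]
    (hindep : ∀ i : Fin n, ∀ S : Finset (Fin n),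
      (∀ j ∈ S, ¬ H.Adj i j ∧ j ≠ i) →
      (P (A i ∩ ⋂ j ∈ S, (A j)ᶜ)).toReal
        = (P (A i)).toReal * (P (⋂ j ∈ S, (A j)ᶜ)).toReal)
    (w : Fin n → ℝ) (hw0 : ∀ i, 0 ≤ w i) (hw1 : ∀ i, w i < 1)
    (hPw : ∀ i, (P (A i)).toReal ≤
      w i * ∏ j ∈ Finset.univ.filter (fun j => H.Adj i j), (1 - w j)) :
    (∏ i, (1 - w i)) ≤ (P (⋂ i, (A i)ᶜ)).toReal ∧
      0 < (∏ i, (1 - w i)) ∧ 0 < (P (⋂ i, (A i)ᶜ)).toReal := by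
  classical
  -- notation
  set f : Finset (Fin n) → ℝ := fun S => (P (⋂ j ∈ S, (A j)ᶜ)).toReal with hf
  have hfnonneg : ∀ S, 0 ≤ f S := fun S => ENNReal.toReal_nonneg
  -- splitting off one event
  have hsplit : ∀ (i : Fin n) (S : Finset (Fin n)), i ∉ S →
      f (insert i S) = f S - (P (A i ∩ ⋂ j ∈ S, (A j)ᶜ)).toReal := by
    intro i S _
    have hX : (⋂ j ∈ insert i S, (A j)ᶜ) = (⋂ j ∈ S, (A j)ᶜ) \ A i := by
      ext x
      simp only [Set.mem_iInter, Set.mem_diff, Finset.mem_insert, Set.mem_compl_iff]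
      constructor
      · intro h
        exact ⟨fun j hj => h j (Or.inr hj), h i (Or.inl rfl)⟩
      · rintro ⟨h1, h2⟩ j (rfl | hj)
        · exact h2
        · exact h1 j hj
    have h := measure_inter_add_diff (μ := P) (⋂ j ∈ S, (A j)ᶜ) (hA i)
    have h' := congrArg ENNReal.toReal h
    rw [ENNReal.toReal_add (measure_ne_top _ _) (measure_ne_top _ _)] at h'
    rw [Set.inter_comm] at h'
    simp only [hf, hX]
    linarith [h']
  -- monotonicity of f-type quantities via measure monotonicity
  have hmono : ∀ (X Y : Set Ω), X ⊆ Y → (P X).toReal ≤ (P Y).toReal := by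
    intro X Y hXY
    exact ENNReal.toReal_mono (measure_ne_top _ _) (measure_mono hXY)
  -- main claim: P(A i ∩ ⋂_S Aⱼᶜ) ≤ w i * f S  for i ∉ S, by strong induction on |S|
  have hb : ∀ m : ℕ, ∀ S : Finset (Fin n), S.card = m → ∀ i ∉ S,
      (P (A i ∩ ⋂ j ∈ S, (A j)ᶜ)).toReal ≤ w i * f S := by
    intro m
    induction m using Nat.strong_induction_on with
    | _ m ih =>
      intro S hScard i hiS
      set S1 : Finset (Fin n) := S.filter (fun j => H.Adj i j) with hS1
      set S2 : Finset (Fin n) := S.filter (fun j => ¬ H.Adj i j) with hS2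
      have hS1S : S1 ⊆ S := Finset.filter_subset _ _
      have hS2S : S2 ⊆ S := Finset.filter_subset _ _
      have hunion : S1 ∪ S2 = S := Finset.filter_union_filter_not_eq _ S
      -- peeling lemma
      have hpeel : ∀ T : Finset (Fin n), T ⊆ S1 →
          (∏ j ∈ T, (1 - w j)) * f S2 ≤ f (T ∪ S2) := by
        intro T
        induction T using Finset.induction_on with
        | empty => simp
        | @insert j T' hj ih2 =>
          intro hsub
          have hjS1 : j ∈ S1 := hsub (Finset.mem_insert_self j T')
          have hT'S1 : T' ⊆ S1 := fun x hx => hsub (Finset.mem_insert_of_mem hx)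
          have hjS : j ∈ S := hS1S hjS1
          have hjS2 : j ∉ S2 := by
            intro hmem
            exact (Finset.mem_filter.mp hmem).2 (Finset.mem_filter.mp hjS1).2
          have hjTU : j ∉ T' ∪ S2 := by
            intro hmem
            rcases Finset.mem_union.mp hmem with h | h
            · exact hj h
            · exact hjS2 h
          have hsubS : T' ∪ S2 ⊆ S.erase j := by
            intro x hx
            refine Finset.mem_erase.mpr ⟨?_, ?_⟩
            · intro hxj; exact hjTU (hxj ▸ hx)
            · rcases Finset.mem_union.mp hx with h | h
              · exact hS1S (hT'S1 h)
              · exact hS2S h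
          have hcard : (T' ∪ S2).card < m := by
            calc (T' ∪ S2).card ≤ (S.erase j).card := Finset.card_le_card hsubS
            _ < S.card := Finset.card_erase_lt_of_mem hjS
            _ = m := hScard
          have hih := ih _ hcard (T' ∪ S2) rfl j hjTU
          have hins : insert j T' ∪ S2 = insert j (T' ∪ S2) := by
            rw [Finset.insert_union]
          have hsplit' := hsplit j (T' ∪ S2) hjTU
          have hchain : (1 - w j) * f (T' ∪ S2) ≤ f (insert j (T' ∪ S2)) := by
            rw [hsplit']
            nlinarith [hfnonneg (T' ∪ S2)]
          have hT' := ih2 hT'S1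
          rw [hins, Finset.prod_insert hj]
          calc ((1 - w j) * ∏ x ∈ T', (1 - w x)) * f S2
              = (1 - w j) * ((∏ x ∈ T', (1 - w x)) * f S2) := by ring
            _ ≤ (1 - w j) * f (T' ∪ S2) := by
                have h0 : 0 ≤ 1 - w j := by linarith [(hw1 j).le]
                exact mul_le_mul_of_nonneg_left hT' h0
            _ ≤ f (insert j (T' ∪ S2)) := hchain
      have hpeelS1 := hpeel S1 Finset.Subset.rfl
      rw [hunion] at hpeelS1
      -- independence at S2
      have hindep' : (P (A i ∩ ⋂ j ∈ S2, (A j)ᶜ)).toReal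
          = (P (A i)).toReal * f S2 := by
        apply hindep i S2
        intro j hjmem
        refine ⟨(Finset.mem_filter.mp hjmem).2, ?_⟩
        intro hji
        exact hiS (hji ▸ hS2S hjmem)
      -- product comparison: S1 ⊆ neighbors
      have hS1nbr : S1 ⊆ Finset.univ.filter (fun j => H.Adj i j) := by
        intro x hx
        simp only [Finset.mem_filter, Finset.mem_univ, true_and]
        exact (Finset.mem_filter.mp hx).2
      have hprodle : (∏ j ∈ Finset.univ.filter (fun j => H.Adj i j), (1 - w j))
          ≤ ∏ j ∈ S1, (1 - w j) := by
        rw [← Finset.prod_sdiff hS1nbr]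
        have h1 : ∏ j ∈ (Finset.univ.filter (fun j => H.Adj i j)) \ S1, (1 - w j) ≤ 1 :=
          Finset.prod_le_one (fun j _ => by linarith [(hw1 j).le])
            (fun j _ => by linarith [hw0 j])
        have h2 : 0 ≤ ∏ j ∈ S1, (1 - w j) :=
          Finset.prod_nonneg (fun j _ => by linarith [(hw1 j).le])
        nlinarith
      -- put it together
      have hstep1 : (P (A i ∩ ⋂ j ∈ S, (A j)ᶜ)).toReal
          ≤ (P (A i ∩ ⋂ j ∈ S2, (A j)ᶜ)).toReal := by
        apply hmono
        exact Set.inter_subset_inter_right _ (Set.biInter_subset_biInter_left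
          (fun x hx => hS2S hx))
      have hfS2nonneg := hfnonneg S2
      have hprodS1nonneg : 0 ≤ ∏ j ∈ S1, (1 - w j) :=
        Finset.prod_nonneg (fun j _ => by linarith [(hw1 j).le])
      calc (P (A i ∩ ⋂ j ∈ S, (A j)ᶜ)).toReal
          ≤ (P (A i ∩ ⋂ j ∈ S2, (A j)ᶜ)).toReal := hstep1
        _ = (P (A i)).toReal * f S2 := hindep'
        _ ≤ (w i * ∏ j ∈ Finset.univ.filter (fun j => H.Adj i j), (1 - w j)) * f S2 :=
            mul_le_mul_of_nonneg_right (hPw i) hfS2nonneg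
        _ ≤ (w i * ∏ j ∈ S1, (1 - w j)) * f S2 :=
            mul_le_mul_of_nonneg_right
              (mul_le_mul_of_nonneg_left hprodle (hw0 i)) hfS2nonneg
        _ = w i * ((∏ j ∈ S1, (1 - w j)) * f S2) := by ring
        _ ≤ w i * f S := mul_le_mul_of_nonneg_left hpeelS1 (hw0 i)
  -- lower bound: f S ≥ ∏_{j ∈ S} (1 - w j)
  have ha : ∀ S : Finset (Fin n), (∏ j ∈ S, (1 - w j)) ≤ f S := by
    intro S
    induction S using Finset.induction_on with
    | empty => simp [hf]
    | @insert i S' hi ihS =>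
      rw [Finset.prod_insert hi, hsplit i S' hi]
      have hbi := hb S'.card S' rfl i hi
      have h1 : 0 ≤ 1 - w i := by linarith [(hw1 i).le]
      nlinarith [hfnonneg S', ihS]
  have hkey := ha Finset.univ
  have heq : (⋂ i, (A i)ᶜ) = ⋂ j ∈ (Finset.univ : Finset (Fin n)), (A j)ᶜ := by
    simp
  have hpos : 0 < ∏ i, (1 - w i) :=
    Finset.prod_pos (fun i _ => by linarith [hw1 i])
  rw [heq]
  exact ⟨hkey, hpos, lt_of_lt_of_le hpos hkey⟩
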